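/- Let p be a sufficiently large prime, and let A₁ ⊆ F_p² be a set of at least (1 − 3α)p points on the line {(1, y) : y ∈ F_p} (for a sufficiently small constant α > 0). Then for every l with 2 ≤ l ≤ |A₁| − 2, the set l*A₁ of sums of l distinct elements of A₁ is the whole line {(l, y) : y ∈ F_p}; hence ⋃_{2 ≤ l ≤ |A₁|−2} l*A₁ covers the strip {(x,y) ∈ F_p² : 2 ≤ x ≤ |A₁| − 2}. -/

import Mathlib

open Finset

/-- Pick `k` disjoint pairs each summing to `c` from a set closed under `a ↦ c - a`
with no fixed points. -/
lemma pairs_lemma {p : ℕ} (c : ZMod p) :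
    ∀ (k : ℕ) (G : Finset (ZMod p)), (∀ a ∈ G, c - a ∈ G) → (∀ a ∈ G, c - a ≠ a) →
      2 * k ≤ G.card → ∃ B ⊆ G, B.card = 2 * k ∧ B.sum id = (k : ZMod p) * c := by
  intro k
  induction k with
  | zero => exact fun G _ _ _ => ⟨∅, empty_subset _, by simp, by simp⟩
  | succ k ih =>
    intro G hcl hfp hcard
    have hne : G.Nonempty := card_pos.mp (by omega)
    obtain ⟨a, ha⟩ := hne
    have hb : c - a ∈ G := hcl a ha
    have hab : c - a ≠ a := hfp a ha
    have hsub : {a, c - a} ⊆ G := by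
      intro x hx; simp only [mem_insert, mem_singleton] at hx
      rcases hx with h | h <;> simp [h, ha, hb]
    have hpaircard : ({a, c - a} : Finset (ZMod p)).card = 2 := by
      rw [card_insert_of_notMem (by simp [Ne.symm hab]), card_singleton]
    have hcl' : ∀ x ∈ G \ {a, c - a}, c - x ∈ G \ {a, c - a} := by
      intro x hx
      simp only [mem_sdiff, mem_insert, mem_singleton, not_or] at hx ⊢
      obtain ⟨hxG, hx1, hx2⟩ := hx
      refine ⟨hcl x hxG, ?_, ?_⟩
      · intro h; apply hx2; have : c - (c - x) = c - a := by rw [h]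
        simpa using this
      · intro h; apply hx1; have : c - (c - x) = c - (c - a) := by rw [h]
        simpa using this
    have hfp' : ∀ x ∈ G \ {a, c - a}, c - x ≠ x := fun x hx => hfp x (mem_sdiff.mp hx).1
    have hcard' : 2 * k ≤ (G \ {a, c - a}).card := by
      rw [card_sdiff_of_subset hsub, hpaircard]; omega
    obtain ⟨B, hBsub, hBcard, hBsum⟩ := ih (G \ {a, c - a}) hcl' hfp' hcard'
    have haB : a ∉ B := fun h => by
      have := hBsub h; simp [mem_sdiff] at this
    have hbB : c - a ∉ B := fun h => by
      have := hBsub h; simp [mem_sdiff] at this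
    refine ⟨insert a (insert (c - a) B), ?_, ?_, ?_⟩
    · intro x hx
      simp only [mem_insert] at hx
      rcases hx with h | h | h
      · simp [h, ha]
      · simp [h, hb]
      · exact (mem_sdiff.mp (hBsub h)).1
    · rw [card_insert_of_notMem (by simp [Ne.symm hab, haB]),
        card_insert_of_notMem hbB, hBcard]
      omega
    · rw [sum_insert (by simp [Ne.symm hab, haB]), sum_insert hbB, hBsum]
      push_cast
      simp only [id_eq]
      ring

/-- For `2 ≤ l` with `2l ≤ |S|` and `S` dense in `ZMod p`, any `t` is a sum of `l`
distinct elements of `S`. -/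
lemma keyA {p : ℕ} [Fact p.Prime] (hp : 100 ≤ p) (S : Finset (ZMod p))
    (hd : 97 * p ≤ 100 * S.card) (l : ℕ) (hl2 : 2 ≤ l) (hln : 2 * l ≤ S.card)
    (t : ZMod p) : ∃ B ⊆ S, B.card = l ∧ B.sum id = t := by
  have hSp : S.card ≤ p := by simpa [ZMod.card] using S.card_le_univ
  have h2ne : (2 : ZMod p) ≠ 0 := by
    have : ¬ (p ∣ 2) := fun h => by have := Nat.le_of_dvd (by norm_num) h; omega
    have h2 : ((2 : ℕ) : ZMod p) ≠ 0 := by rwa [Ne, ZMod.natCast_eq_zero_iff]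
    simpa using h2
  have hSne : S.Nonempty := card_pos.mp (by omega)
  obtain ⟨e, he⟩ := hSne
  set k := l / 2 with hk
  have hk1 : 1 ≤ k := by omega
  have hkp : k < p := by omega
  have hk0 : (k : ZMod p) ≠ 0 := by
    rw [Ne, ZMod.natCast_eq_zero_iff]
    exact fun h => by have := Nat.le_of_dvd (by omega) h; omega
  set t' := if l = 2 * k then t else t - e with ht'
  set c := (k : ZMod p)⁻¹ * t' with hc
  have hkc : (k : ZMod p) * c = t' := by
    rw [hc, ← mul_assoc, mul_inv_cancel₀ hk0, one_mul]
  set T := S.image (fun a => c - a) with hT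
  have hTmem : ∀ a : ZMod p, a ∈ T ↔ c - a ∈ S := by
    intro a
    rw [hT, mem_image]
    constructor
    · rintro ⟨b, hb, rfl⟩; simpa using hb
    · intro h; exact ⟨c - a, h, by simp⟩
  have hTcard : T.card = S.card := card_image_of_injective _ sub_right_injective
  set G := (S ∩ T) \ {2⁻¹ * c, e, c - e} with hG
  have hGmem : ∀ a : ZMod p, a ∈ G ↔
      a ∈ S ∧ c - a ∈ S ∧ a ≠ 2⁻¹ * c ∧ a ≠ e ∧ a ≠ c - e := by
    intro a
    simp only [hG, mem_sdiff, mem_inter, mem_insert, mem_singleton, not_or, hTmem]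
    tauto
  have hhalf : (2⁻¹ : ZMod p) * c + 2⁻¹ * c = c := by
    rw [← two_mul, ← mul_assoc, mul_inv_cancel₀ h2ne, one_mul]
  have hGsub : G ⊆ S := fun a ha => ((hGmem a).mp ha).1
  have hGcl : ∀ a ∈ G, c - a ∈ G := by
    intro a ha
    obtain ⟨h1, h2, h3, h4, h5⟩ := (hGmem a).mp ha
    rw [hGmem]
    refine ⟨h2, by simpa using h1, ?_, ?_, ?_⟩
    · intro h; apply h3
      have ha2 : a = c - 2⁻¹ * c := by linear_combination -h
      rw [ha2, sub_eq_iff_eq_add]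
      exact hhalf.symm
    · intro h; apply h5
      linear_combination -h
    · intro h; apply h4
      exact sub_right_injective h
  have hGfp : ∀ a ∈ G, c - a ≠ a := by
    intro a ha h
    obtain ⟨_, _, h3, _, _⟩ := (hGmem a).mp ha
    apply h3
    have h2a : (2 : ZMod p) * a = c := by linear_combination -h
    have : (2 : ZMod p) * a = 2 * (2⁻¹ * c) := by
      rw [h2a, ← mul_assoc, mul_inv_cancel₀ h2ne, one_mul]
    exact mul_left_cancel₀ h2ne this
  have hGcard : 2 * k ≤ G.card := by
    have h1 : (S ∪ T).card + (S ∩ T).card = S.card + T.card :=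
      Finset.card_union_add_card_inter S T
    have h2 : (S ∪ T).card ≤ p := by simpa [ZMod.card] using (S ∪ T).card_le_univ
    have h3 : (S ∩ T).card ≤ G.card + 3 := by
      have h4 : G.card + ({2⁻¹ * c, e, c - e} : Finset (ZMod p)).card
          = ((S ∩ T) ∪ {2⁻¹ * c, e, c - e}).card := by
        rw [hG]; exact Finset.card_sdiff_add_card _ _
      have h5 : ({2⁻¹ * c, e, c - e} : Finset (ZMod p)).card ≤ 3 :=
        (card_insert_le _ _).trans (by
          have h := card_insert_le e ({c - e} : Finset (ZMod p))
          rw [card_singleton] at h; omega)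
      have h6 : (S ∩ T).card ≤ ((S ∩ T) ∪ {2⁻¹ * c, e, c - e}).card :=
        card_le_card subset_union_left
      omega
    omega
  obtain ⟨B, hBG, hBcard, hBsum⟩ := pairs_lemma c k G hGcl hGfp hGcard
  have hlk : l = 2 * k ∨ l = 2 * k + 1 := by omega
  rcases hlk with hcase | hcase
  · refine ⟨B, hBG.trans hGsub, by omega, ?_⟩
    rw [hBsum, hkc, ht', if_pos hcase]
  · have heB : e ∉ B := fun h => ((hGmem e).mp (hBG h)).2.2.2.1 rfl
    refine ⟨insert e B, ?_, ?_, ?_⟩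
    · intro x hx
      rcases mem_insert.mp hx with h | h
      · rw [h]; exact he
      · exact hGsub (hBG h)
    · rw [card_insert_of_notMem heB, hBcard]; omega
    · rw [sum_insert heB, hBsum, hkc, ht', if_neg (by omega)]
      simp

lemma key {p : ℕ} [Fact p.Prime] (hp : 100 ≤ p) (S : Finset (ZMod p))
    (hd : 97 * p ≤ 100 * S.card) (l : ℕ) (hl2 : 2 ≤ l) (hl : l + 2 ≤ S.card)
    (t : ZMod p) : ∃ B ⊆ S, B.card = l ∧ B.sum id = t := by
  by_cases h : 2 * l ≤ S.card
  · exact keyA hp S hd l hl2 h t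
  · obtain ⟨B', hB'S, hB'c, hB's⟩ :=
      keyA hp S hd (S.card - l) (by omega) (by omega) (S.sum id - t)
    refine ⟨S \ B', sdiff_subset, ?_, ?_⟩
    · rw [card_sdiff_of_subset hB'S, hB'c]; omega
    · have h2 : (S \ B').sum id + B'.sum id = S.sum id := Finset.sum_sdiff hB'S
      rw [hB's] at h2
      have := eq_sub_of_add_eq h2
      simpa using this

theorem lines_and_strip :
    ∃ α : ℝ, 0 < α ∧ ∃ p₀ : ℕ, ∀ p : ℕ, p₀ ≤ p → p.Prime →
      ∀ A₁ : Finset (ZMod p × ZMod p),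
        (∀ x ∈ A₁, x.1 = 1) → (1 - 3 * α) * p ≤ (A₁.card : ℝ) →
        (∀ l : ℕ, 2 ≤ l → l + 2 ≤ A₁.card →
          ∀ x : ZMod p × ZMod p,
            (∃ B ⊆ A₁, B.card = l ∧ B.sum id = x) ↔ x.1 = (l : ZMod p)) ∧
        (∀ x : ZMod p × ZMod p, 2 ≤ x.1.val → x.1.val ≤ A₁.card - 2 →
          ∃ B ⊆ A₁, 2 ≤ B.card ∧ B.card ≤ A₁.card - 2 ∧ B.sum id = x) := by
  refine ⟨1/100, by norm_num, 100, ?_⟩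
  intro p hp hpprime A₁ hline hcard
  haveI : Fact p.Prime := ⟨hpprime⟩
  set S := A₁.image Prod.snd with hS
  have hinj : Set.InjOn Prod.snd (A₁ : Set (ZMod p × ZMod p)) := by
    intro a ha b hb h
    exact Prod.ext (by rw [hline a ha, hline b hb]) h
  have hScard : S.card = A₁.card := card_image_of_injOn hinj
  have hd : 97 * p ≤ 100 * S.card := by
    rw [hScard]
    have : (97 : ℝ) * p ≤ 100 * A₁.card := by linarith
    exact_mod_cast this
  have main : ∀ l : ℕ, 2 ≤ l → l + 2 ≤ A₁.card →
      ∀ x : ZMod p × ZMod p,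
        (∃ B ⊆ A₁, B.card = l ∧ B.sum id = x) ↔ x.1 = (l : ZMod p) := by
    intro l hl2 hlcard x
    constructor
    · rintro ⟨B, hBA, hBc, hBs⟩
      rw [← hBs]
      have h1 : (B.sum id).1 = ∑ b ∈ B, (b.1) := Prod.fst_sum
      rw [h1, Finset.sum_congr rfl (fun b hb => hline b (hBA hb)), Finset.sum_const,
        nsmul_eq_mul, mul_one, hBc]
    · intro hx1
      obtain ⟨B', hB'S, hB'c, hB's⟩ := key hp S hd l hl2 (by omega) x.2
      refine ⟨B'.image (fun y => ((1 : ZMod p), y)), ?_, ?_, ?_⟩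
      · intro z hz
        obtain ⟨y, hy, rfl⟩ := mem_image.mp hz
        obtain ⟨a, haA, hay⟩ := mem_image.mp (hB'S hy)
        have : a = (1, y) := Prod.ext (hline a haA) hay
        rwa [← this]
      · rw [card_image_of_injective _ (fun a b h => by simpa using h), hB'c]
      · have hinj2 : ∀ y ∈ B', ∀ z ∈ B',
            (fun y => ((1 : ZMod p), y)) y = (fun y => ((1 : ZMod p), y)) z → y = z :=
          fun y _ z _ h => by simpa using h
        rw [Finset.sum_image hinj2]
        refine Prod.ext ?_ ?_
        · rw [Prod.fst_sum]
          simp only [id_eq]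
          rw [Finset.sum_const, nsmul_eq_mul, mul_one, hB'c, hx1]
        · rw [Prod.snd_sum]
          simpa using hB's
  refine ⟨main, ?_⟩
  intro x hx2 hxA
  have hcard4 : 4 ≤ A₁.card := by omega
  have hx1 : x.1 = ((x.1.val : ℕ) : ZMod p) := by
    simp [ZMod.natCast_val, ZMod.cast_id]
  obtain ⟨B, hBA, hBc, hBs⟩ :=
    ((main x.1.val hx2 (by omega) x).mpr hx1).imp (fun B h => h)
  exact ⟨B, hBA, by omega, by omega, hBs⟩
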